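/- arXiv:2106.10784 — 2 statements merged into one kernel-verified Lean document; each statement's English description precedes it below -/
import Mathlib

section
/- Let H be a symmetric matrix with μI ⪯ H ⪯ (1/γ)I (μ, γ > 0, γμ ≤ 1), let v be a vector with ‖v‖ ≤ C₂, and let B be a matrix with ‖B‖ ≤ C₁. Define the exact quantity g = vᵀ H⁻¹ B and the truncated approximation g_K = γ vᵀ (∑_{k=0}^{K} (I - γH)^k) B. Then ‖g - g_K‖ ≤ C₁ C₂ (1/μ)(1 - γμ)^{K+1}. -/
open scoped RealInnerProductSpace

set_option maxHeartbeats 1000000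
set_option synthInstance.maxHeartbeats 400000

/-- Theorem 1 error bound: let `H` be symmetric with `μ I ⪯ H ⪯ (1/γ) I`
(`μ, γ > 0`, `γ μ ≤ 1`), `v` a vector with `‖v‖ ≤ C₂`, and `B` an operator with
`‖B‖ ≤ C₁`.  With `g = vᵀ H⁻¹ B` the exact quantity and
`g_K = γ vᵀ (∑_{k=0}^K (I - γH)^k) B` the truncated approximation,
`‖g - g_K‖ ≤ C₁ C₂ (1/μ)(1 - γμ)^{K+1}`. -/
theorem hypergradient_truncation_error
    {n m : ℕ}
    (H : EuclideanSpace ℝ (Fin n) →L[ℝ] EuclideanSpace ℝ (Fin n))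
    (hsym : IsSelfAdjoint H)
    (μ γ C₁ C₂ : ℝ) (hμ : 0 < μ) (hγ : 0 < γ) (hγμ : γ * μ ≤ 1)
    (hlow : ∀ x, μ * ‖x‖ ^ 2 ≤ ⟪H x, x⟫)
    (hup : ∀ x, ⟪H x, x⟫ ≤ (1 / γ) * ‖x‖ ^ 2)
    (v : EuclideanSpace ℝ (Fin n)) (hv : ‖v‖ ≤ C₂)
    (B : EuclideanSpace ℝ (Fin m) →L[ℝ] EuclideanSpace ℝ (Fin n)) (hB : ‖B‖ ≤ C₁)
    (Hinv : EuclideanSpace ℝ (Fin n) →L[ℝ] EuclideanSpace ℝ (Fin n))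
    (hHinv : H.comp Hinv = 1 ∧ Hinv.comp H = 1)
    (K : ℕ) :
    ‖(InnerProductSpace.toDual ℝ _ v).toContinuousLinearMap.comp (Hinv.comp B) -
        (InnerProductSpace.toDual ℝ _ v).toContinuousLinearMap.comp
          ((γ • ∑ k ∈ Finset.range (K + 1),
              ((1 : EuclideanSpace ℝ (Fin n) →L[ℝ] EuclideanSpace ℝ (Fin n)) - γ • H) ^ k).comp B)‖
      ≤ C₁ * C₂ * (1 / μ) * (1 - γ * μ) ^ (K + 1) := by
  obtain ⟨hHR, hHL⟩ := hHinv
  have hC₁ : 0 ≤ C₁ := le_trans (norm_nonneg B) hB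
  have hC₂ : 0 ≤ C₂ := le_trans (norm_nonneg v) hv
  have c_nonneg : 0 ≤ 1 - γ * μ := by linarith
  set T : EuclideanSpace ℝ (Fin n) →L[ℝ] EuclideanSpace ℝ (Fin n) := 1 - γ • H with hT
  set S : EuclideanSpace ℝ (Fin n) →L[ℝ] EuclideanSpace ℝ (Fin n) := ∑ k ∈ Finset.range (K + 1), T ^ k with hS
  clear_value T S
  have hHsym : ∀ x y : EuclideanSpace ℝ (Fin n), ⟪H x, y⟫ = ⟪x, H y⟫ := fun x y => hsym.isSymmetric x y
  -- quadratic form of T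
  have hTz : ∀ z : EuclideanSpace ℝ (Fin n), ⟪T z, z⟫ = ‖z‖ ^ 2 - γ * ⟪H z, z⟫ := by
    intro z
    have hz : T z = z - γ • H z := by
      simp [hT, ContinuousLinearMap.sub_apply, ContinuousLinearMap.smul_apply]
    rw [hz, inner_sub_left, real_inner_smul_left, real_inner_self_eq_norm_sq]
  have hTlow : ∀ z : EuclideanSpace ℝ (Fin n), 0 ≤ ⟪T z, z⟫ := by
    intro z
    rw [hTz]
    have h := hup z
    have h2 : γ * (1 / γ * ‖z‖ ^ 2) = ‖z‖ ^ 2 := by field_simp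
    nlinarith [mul_le_mul_of_nonneg_left h hγ.le, h2]
  have hTup : ∀ z : EuclideanSpace ℝ (Fin n), ⟪T z, z⟫ ≤ (1 - γ * μ) * ‖z‖ ^ 2 := by
    intro z
    rw [hTz]
    have h := hlow z
    nlinarith [h, hγ]
  have hTsym : ∀ x y : EuclideanSpace ℝ (Fin n), ⟪T x, y⟫ = ⟪x, T y⟫ := by
    intro x y
    have h1 : T x = x - γ • H x := by
      simp [hT, ContinuousLinearMap.sub_apply, ContinuousLinearMap.smul_apply]
    have h2 : T y = y - γ • H y := by
      simp [hT, ContinuousLinearMap.sub_apply, ContinuousLinearMap.smul_apply]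
    rw [h1, h2, inner_sub_left, inner_sub_right, real_inner_smul_left,
      real_inner_smul_right, hHsym x y]
  -- polarization bound
  have key : ∀ x y : EuclideanSpace ℝ (Fin n), ⟪T x, y⟫ ≤ (1 - γ * μ) / 2 * (‖x‖ ^ 2 + ‖y‖ ^ 2) := by
    intro x y
    have h1 : 0 ≤ ⟪T (x - y), x - y⟫ := hTlow _
    have h2 : ⟪T (x + y), x + y⟫ ≤ (1 - γ * μ) * ‖x + y‖ ^ 2 := hTup _
    have hexp1 : ⟪T (x + y), x + y⟫ = ⟪T x, x⟫ + 2 * ⟪T x, y⟫ + ⟪T y, y⟫ := by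
      have hc : ⟪T y, x⟫ = ⟪T x, y⟫ := by
        rw [hTsym y x, real_inner_comm]
      simp only [map_add, inner_add_left, inner_add_right, hc]
      ring
    have hexp2 : ⟪T (x - y), x - y⟫ = ⟪T x, x⟫ - 2 * ⟪T x, y⟫ + ⟪T y, y⟫ := by
      have hc : ⟪T y, x⟫ = ⟪T x, y⟫ := by
        rw [hTsym y x, real_inner_comm]
      simp only [map_sub, inner_sub_left, inner_sub_right, hc]
      ring
    have hpar : ‖x + y‖ ^ 2 ≤ 2 * (‖x‖ ^ 2 + ‖y‖ ^ 2) := by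
      have h := norm_add_sq_real x y
      have h' := real_inner_le_norm x y
      nlinarith [sq_nonneg (‖x‖ - ‖y‖)]
    nlinarith [h1, h2, hexp1, hexp2, hpar]
  -- pointwise norm bound for T
  have hTx : ∀ x : EuclideanSpace ℝ (Fin n), ‖T x‖ ≤ (1 - γ * μ) * ‖x‖ := by
    intro x
    rcases eq_or_ne (T x) 0 with h0 | h0
    · rw [h0, norm_zero]
      exact mul_nonneg c_nonneg (norm_nonneg x)
    · rcases eq_or_ne x 0 with hx | hx
      · exact absurd (by rw [hx, map_zero]) h0
      have hTx0 : 0 < ‖T x‖ := norm_pos_iff.mpr h0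
      have hx0 : 0 < ‖x‖ := norm_pos_iff.mpr hx
      set y : EuclideanSpace ℝ (Fin n) := (‖x‖ / ‖T x‖) • T x with hy
      have hyn : ‖y‖ = ‖x‖ := by
        rw [hy, norm_smul, Real.norm_eq_abs, abs_div, abs_norm, abs_norm,
          div_mul_cancel₀ _ (ne_of_gt hTx0)]
      have hip : ⟪T x, y⟫ = ‖x‖ * ‖T x‖ := by
        rw [hy, real_inner_smul_right, real_inner_self_eq_norm_sq]
        field_simp
      have h := key x y
      rw [hip, hyn] at h
      nlinarith [h, hx0]
  have hTnorm : ‖T‖ ≤ 1 - γ * μ := ContinuousLinearMap.opNorm_le_bound _ c_nonneg hTx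
  -- norm bound for Hinv
  have hHinvnorm : ‖Hinv‖ ≤ 1 / μ := by
    apply ContinuousLinearMap.opNorm_le_bound _ (by positivity)
    intro x
    have h1 := hlow (Hinv x)
    have h2 : H (Hinv x) = x := by
      have := ContinuousLinearMap.ext_iff.mp hHR x
      simpa using this
    rw [h2] at h1
    have h3 : ⟪x, Hinv x⟫ ≤ ‖x‖ * ‖Hinv x‖ := real_inner_le_norm x (Hinv x)
    rcases eq_or_lt_of_le (norm_nonneg (Hinv x)) with hz | hz
    · rw [← hz]; positivity
    · rw [div_mul_eq_mul_div, one_mul, le_div_iff₀ hμ]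
      nlinarith [h1, h3, hz]
  -- geometric sum identity
  have hgeom : (γ • H) * S = 1 - T ^ (K + 1) := by
    have h1 : γ • H = 1 - T := by rw [hT, sub_sub_cancel]
    have h2 := mul_geom_sum T (K + 1)
    rw [h1, hS]
    have h3 : (1 - T) * ∑ k ∈ Finset.range (K + 1), T ^ k =
        -((T - 1) * ∑ k ∈ Finset.range (K + 1), T ^ k) := by
      simp only [sub_mul, one_mul, neg_sub]
    rw [h3, h2, neg_sub]
  have hmulS : (γ • H) * S = H * (γ • S) := by
    rw [ContinuousLinearMap.mul_def, ContinuousLinearMap.mul_def,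
      ContinuousLinearMap.smul_comp, ContinuousLinearMap.comp_smul]
  have hdiff : Hinv - γ • S = Hinv * T ^ (K + 1) := by
    have hinvH : Hinv * H = 1 := hHL
    have h4 : Hinv * T ^ (K + 1) = Hinv * (1 - H * (γ • S)) := by
      rw [← hmulS, hgeom, sub_sub_cancel]
    rw [h4, mul_sub, mul_one, ← mul_assoc, hinvH, one_mul]
  set f := (InnerProductSpace.toDual ℝ (EuclideanSpace ℝ (Fin n)) v).toContinuousLinearMap with hf
  have hfeq : f = (InnerProductSpace.toDual ℝ (EuclideanSpace ℝ (Fin n)) v :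
      EuclideanSpace ℝ (Fin n) →L[ℝ] ℝ) := by
    ext x; rfl
  have hfnorm : ‖f‖ ≤ C₂ := by
    rw [hfeq]
    calc ‖(InnerProductSpace.toDual ℝ (EuclideanSpace ℝ (Fin n)) v :
          EuclideanSpace ℝ (Fin n) →L[ℝ] ℝ)‖ = ‖v‖ :=
      (InnerProductSpace.toDual ℝ (EuclideanSpace ℝ (Fin n))).norm_map v
    _ ≤ C₂ := hv
  have hTpow : ‖T ^ (K + 1)‖ ≤ (1 - γ * μ) ^ (K + 1) :=
    le_trans (norm_pow_le' T (Nat.succ_pos K)) (pow_le_pow_left₀ (norm_nonneg T) hTnorm _)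
  have hmul : (Hinv * T ^ (K + 1)) = Hinv.comp (T ^ (K + 1)) := rfl
  calc ‖f.comp (Hinv.comp B) - f.comp ((γ • S).comp B)‖
      = ‖f.comp ((Hinv - γ • S).comp B)‖ := by
        rw [ContinuousLinearMap.sub_comp, ContinuousLinearMap.comp_sub]
    _ = ‖f.comp ((Hinv.comp (T ^ (K + 1))).comp B)‖ := by rw [hdiff, hmul]
    _ ≤ ‖f‖ * ‖(Hinv.comp (T ^ (K + 1))).comp B‖ := ContinuousLinearMap.opNorm_comp_le _ _
    _ ≤ ‖f‖ * (‖Hinv.comp (T ^ (K + 1))‖ * ‖B‖) := by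
        exact mul_le_mul_of_nonneg_left (ContinuousLinearMap.opNorm_comp_le _ _) (norm_nonneg f)
    _ ≤ ‖f‖ * (‖Hinv‖ * ‖T ^ (K + 1)‖ * ‖B‖) := by
        have := ContinuousLinearMap.opNorm_comp_le Hinv (T ^ (K + 1))
        gcongr
    _ ≤ C₂ * (1 / μ * (1 - γ * μ) ^ (K + 1) * C₁) := by
        gcongr
    _ = C₁ * C₂ * (1 / μ) * (1 - γ * μ) ^ (K + 1) := by ring
end

section
/- Fixed-point unrolling: suppose the recurrence Z_t = A Z_{t-1} + B uses constant matrices A, B for the last K steps. Then the contribution of the last K steps equals ∑_{k=0}^{K-1} A^k B. In particular, if A = I - γH and B = -γC for a gradient-descent step at a stationary point of a C² function L₁ (H = ∇²_{ww}L₁, C = ∇²_{wα}L₁ at w*), the K-step truncated backpropagation hypergradient equals the K-term Neumann-approximation hypergradient: ∂L₂/∂α - γ (∂L₂/∂w)ᵀ ∑_{k=0}^{K-1} (I - γH)^k C. -/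
/-- Corollary 2 (fixed-point unrolling): if the recurrence `Z_t = A Z_{t-1} + B`
uses constant matrices `A, B` for the last `K` steps, the contribution of those
steps is `(∑_{k=0}^{K-1} A^k) B`, i.e. `Z_K = A^K Z_0 + (∑_{k<K} A^k) B`.
In particular, for a gradient-descent step at a stationary point of `L₁`
(`A = I - γH` with `H = ∇²_{ww}L₁`, `B = -γC` with `C = ∇²_{wα}L₁`), the
`K`-step truncated backpropagation hypergradient equals the `K`-term
Neumann-approximation hypergradient
`∂L₂/∂α - γ (∂L₂/∂w)ᵀ ∑_{k=0}^{K-1} (I - γH)^k C`. -/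
theorem fixed_point_unrolling_eq_neumann
    {n m K : ℕ} (γ : ℝ)
    (A H : Matrix (Fin n) (Fin n) ℝ)
    (B C : Matrix (Fin n) (Fin m) ℝ)
    (Z : ℕ → Matrix (Fin n) (Fin m) ℝ)
    (g2α : Matrix (Fin 1) (Fin m) ℝ)
    (g2w : Matrix (Fin 1) (Fin n) ℝ)
    (hA : A = 1 - γ • H) (hB : B = -(γ • C))
    (hrec : ∀ t, 1 ≤ t → t ≤ K → Z t = A * Z (t - 1) + B) :
    Z K = A ^ K * Z 0 + (∑ k ∈ Finset.range K, A ^ k) * B ∧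
    g2α + g2w * ((∑ k ∈ Finset.range K, A ^ k) * B) =
      g2α - γ • (g2w * (∑ k ∈ Finset.range K, (1 - γ • H) ^ k) * C) := by
  constructor
  · have key : ∀ t, t ≤ K → Z t = A ^ t * Z 0 + (∑ k ∈ Finset.range t, A ^ k) * B := by
      intro t
      induction t with
      | zero => intro _; simp
      | succ t ih =>
        intro ht
        have h1 := hrec (t+1) (Nat.le_add_left 1 t) ht
        simp only [Nat.add_sub_cancel] at h1
        rw [h1, ih (Nat.le_of_succ_le ht), Finset.sum_range_succ']
        have hs : ∑ k ∈ Finset.range t, A ^ (k + 1) = A * ∑ k ∈ Finset.range t, A ^ k := by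
          rw [Finset.mul_sum]
          exact Finset.sum_congr rfl fun k _ => (pow_succ' A k)
        rw [hs, pow_succ' A t]
        simp only [Matrix.mul_add, Matrix.add_mul, pow_zero, Matrix.one_mul, Matrix.mul_assoc, add_assoc]
    exact key K le_rfl
  · rw [hB, hA]
    simp [Matrix.mul_smul, Matrix.mul_assoc, sub_eq_add_neg]
end
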